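/- For any fixed integer w ≥ 1 and any η > 0, there exists N₀ < ∞ such that for all N > N₀, the limit x^{(∞)} of the coupled recursion satisfies max_{i∈[1:M]} x_i^{(∞)} + η ≥ x̲*, where x̲* = min{x ∈ X : U_s(x) = min_{z∈X} U_s(z)}. -/

import Mathlib

open Set Filter

/-- The coupling matrix `A` of size `N × M` with `M = N + w − 1`. -/
noncomputable def Amat (w N : ℕ) (j : Fin N) (k : Fin (N + w - 1)) : ℝ :=
  if (j : ℕ) ≤ (k : ℕ) ∧ (k : ℕ) < (j : ℕ) + w then (w : ℝ)⁻¹ else 0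

/-- The coupled update `h(x) = Aᵀ f(A g(x))`. -/
noncomputable def coupledMap (w N : ℕ) (f g : ℝ → ℝ)
    (x : Fin (N + w - 1) → ℝ) : Fin (N + w - 1) → ℝ :=
  fun i => ∑ j : Fin N, Amat w N j i * f (∑ k, Amat w N j k * g (x k))

/-- The coupled recursion initialized at `x_max·1`. -/
noncomputable def coupledSeq (w N : ℕ) (f g : ℝ → ℝ) (xmax : ℝ) :
    ℕ → Fin (N + w - 1) → ℝ
  | 0 => fun _ => xmax
  | ℓ + 1 => coupledMap w N f g (coupledSeq w N f g xmax ℓ)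


lemma primitive_diff_ge {φ : ℝ → ℝ} {d a b : ℝ}
    (hmono : MonotoneOn φ (Set.Icc 0 d)) (hcont : ContinuousOn φ (Set.Icc 0 d))
    (ha : a ∈ Set.Icc 0 d) (hb : b ∈ Set.Icc 0 d) :
    φ a * (b - a) ≤ (∫ z in (0:ℝ)..b, φ z) - ∫ z in (0:ℝ)..a, φ z := by
  have h0 : (0:ℝ) ∈ Set.Icc 0 d := ⟨le_refl _, ha.1.trans ha.2⟩
  have hint : ∀ p ∈ Set.Icc (0:ℝ) d, ∀ q ∈ Set.Icc (0:ℝ) d,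
      IntervalIntegrable φ MeasureTheory.volume p q := fun p hp q hq =>
    (hcont.mono (Set.uIcc_subset_Icc hp hq)).intervalIntegrable
  have heq : (∫ z in (0:ℝ)..b, φ z) - ∫ z in (0:ℝ)..a, φ z = ∫ z in a..b, φ z :=
    intervalIntegral.integral_interval_sub_left (hint 0 h0 b hb) (hint 0 h0 a ha)
  rw [heq]
  rcases le_total a b with h | h
  · have hle : ∫ z in a..b, (fun _ => φ a) z ≤ ∫ z in a..b, φ z :=
      intervalIntegral.integral_mono_on h intervalIntegrable_const (hint a ha b hb)
        (fun x hx => hmono ha ⟨le_trans ha.1 hx.1, le_trans hx.2 hb.2⟩ hx.1)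
    simpa [intervalIntegral.integral_const, smul_eq_mul, mul_comm] using hle
  · have h2 : ∫ z in b..a, φ z ≤ ∫ z in b..a, (fun _ => φ a) z :=
      intervalIntegral.integral_mono_on h (hint b hb a ha) intervalIntegrable_const
        (fun x hx => hmono ⟨le_trans hb.1 hx.1, le_trans hx.2 ha.2⟩ ha hx.2)
    rw [intervalIntegral.integral_symm]
    simp only [intervalIntegral.integral_const, smul_eq_mul] at h2
    nlinarith [h2]

lemma Amat_nonneg (w N : ℕ) (j : Fin N) (k : Fin (N + w - 1)) : 0 ≤ Amat w N j k := by
  unfold Amat; split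
  · positivity
  · exact le_refl 0

lemma Amat_row_sum {w N : ℕ} (hw : 1 ≤ w) (j : Fin N) :
    ∑ k : Fin (N + w - 1), Amat w N j k = 1 := by
  have hj : (j : ℕ) < N := j.isLt
  have key : ∑ k : Fin (N + w - 1), Amat w N j k
      = ∑ m ∈ Finset.range (N + w - 1),
        (if (j:ℕ) ≤ m ∧ m < (j:ℕ) + w then (w:ℝ)⁻¹ else 0) := by
    unfold Amat
    exact Fin.sum_univ_eq_sum_range (fun m => if (j:ℕ) ≤ m ∧ m < (j:ℕ) + w then (w:ℝ)⁻¹ else 0) (N + w - 1)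
  rw [key]
  have h2 : ∀ m ∈ Finset.range (N + w - 1),
      (if (j:ℕ) ≤ m ∧ m < (j:ℕ) + w then (w:ℝ)⁻¹ else 0)
        = if m ∈ Finset.Ico (j:ℕ) ((j:ℕ) + w) then (w:ℝ)⁻¹ else 0 := by
    intro m _; simp [Finset.mem_Ico]
  rw [Finset.sum_congr rfl h2, Finset.sum_ite_mem,
    Finset.inter_eq_right.mpr (by
      intro m hm; rw [Finset.mem_range]
      have := Finset.mem_Ico.mp hm; omega),
    Finset.sum_const, Nat.card_Ico, Nat.add_sub_cancel_left, nsmul_eq_mul]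
  exact mul_inv_cancel₀ (Nat.cast_ne_zero.mpr (by omega))

lemma Amat_col_sum_le {w N : ℕ} (hw : 1 ≤ w) (k : Fin (N + w - 1)) :
    ∑ j : Fin N, Amat w N j k ≤ 1 := by
  have key : ∑ j : Fin N, Amat w N j k
      = ∑ m ∈ Finset.range N, (if m ≤ (k:ℕ) ∧ (k:ℕ) < m + w then (w:ℝ)⁻¹ else 0) := by
    unfold Amat
    exact Fin.sum_univ_eq_sum_range (fun m => if m ≤ (k:ℕ) ∧ (k:ℕ) < m + w then (w:ℝ)⁻¹ else 0) N
  rw [key]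
  have h2 : ∀ m ∈ Finset.range N, (if m ≤ (k:ℕ) ∧ (k:ℕ) < m + w then (w:ℝ)⁻¹ else 0)
      = if m ∈ Finset.Ico ((k:ℕ)+1-w) ((k:ℕ)+1) then (w:ℝ)⁻¹ else 0 := by
    intro m _
    have hiff : (m ≤ (k:ℕ) ∧ (k:ℕ) < m + w) ↔ ((k:ℕ)+1-w ≤ m ∧ m < (k:ℕ)+1) := by omega
    simp [Finset.mem_Ico, hiff]
  rw [Finset.sum_congr rfl h2, Finset.sum_ite_mem, Finset.sum_const, nsmul_eq_mul]
  have hw0 : (0:ℝ) < w := by exact_mod_cast Nat.pos_of_ne_zero (by omega : w ≠ 0)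
  have hcard : ((Finset.range N ∩ Finset.Ico ((k:ℕ)+1-w) ((k:ℕ)+1)).card : ℝ) ≤ (w : ℝ) := by
    have h1 : (Finset.range N ∩ Finset.Ico ((k:ℕ)+1-w) ((k:ℕ)+1)).card
        ≤ (Finset.Ico ((k:ℕ)+1-w) ((k:ℕ)+1)).card :=
      Finset.card_le_card Finset.inter_subset_right
    have h2 : (Finset.Ico ((k:ℕ)+1-w) ((k:ℕ)+1)).card ≤ w := by
      rw [Nat.card_Ico]; omega
    exact_mod_cast le_trans h1 h2
  calc ((Finset.range N ∩ Finset.Ico ((k:ℕ)+1-w) ((k:ℕ)+1)).card : ℝ) * (w:ℝ)⁻¹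
      ≤ (w:ℝ) * (w:ℝ)⁻¹ := by gcongr
    _ = 1 := mul_inv_cancel₀ (ne_of_gt hw0)

noncomputable def yvec (w N : ℕ) (g : ℝ → ℝ) (x : Fin (N + w - 1) → ℝ) (j : Fin N) : ℝ :=
  ∑ k, Amat w N j k * g (x k)

noncomputable def Upot (w N : ℕ) (f g : ℝ → ℝ) (x : Fin (N + w - 1) → ℝ) : ℝ :=
  (∑ i, (x i * g (x i) - ∫ z in (0:ℝ)..(x i), g z))
    - ∑ j, ∫ z in (0:ℝ)..(yvec w N g x j), f z

theorem stmt_1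
    (xmax ymax : ℝ) (hxmax : 0 < xmax) (hymax : 0 < ymax)
    (f g : ℝ → ℝ)
    (hf_maps : Set.MapsTo f (Set.Icc 0 ymax) (Set.Icc 0 xmax))
    (hf_mono : MonotoneOn f (Set.Icc 0 ymax))
    (hf_C1 : ContDiffOn ℝ 1 f (Set.Icc 0 ymax))
    (hg_maps : Set.MapsTo g (Set.Icc 0 xmax) (Set.Icc 0 ymax))
    (hg_strict : StrictMonoOn g (Set.Icc 0 xmax))
    (hg_C2 : ContDiffOn ℝ 2 g (Set.Icc 0 xmax))
    (hg_top : g xmax = ymax)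
    (Us : ℝ → ℝ)
    (hUs : ∀ x : ℝ, Us x = x * g x - (∫ z in (0:ℝ)..x, g z) - ∫ z in (0:ℝ)..(g x), f z)
    (xund : ℝ) (hxund_mem : xund ∈ Set.Icc 0 xmax)
    (hxund_min : ∀ z ∈ Set.Icc 0 xmax, Us xund ≤ Us z)
    (hxund_least : ∀ x ∈ Set.Icc 0 xmax, (∀ z ∈ Set.Icc 0 xmax, Us x ≤ Us z) → xund ≤ x)
    (w : ℕ) (hw : 1 ≤ w) (η : ℝ) (hη : 0 < η) :
    ∃ N₀ : ℕ, ∀ N : ℕ, N₀ < N →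
      ∀ xinf : Fin (N + w - 1) → ℝ,
        (∀ i, Tendsto (fun ℓ => coupledSeq w N f g xmax ℓ i) atTop (nhds (xinf i))) →
        ∃ i, xund ≤ xinf i + η := by
  classical
  have hymax0 : (0:ℝ) ≤ ymax := hymax.le
  have hxmax0 : (0:ℝ) ≤ xmax := hxmax.le
  have hf_cont : ContinuousOn f (Set.Icc 0 ymax) := hf_C1.continuousOn
  have hg_cont : ContinuousOn g (Set.Icc 0 xmax) := hg_C2.continuousOn
  have hg_mono : MonotoneOn g (Set.Icc 0 xmax) := hg_strict.monotoneOn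
  -- nonnegativity of the primitive of f
  have hF_nonneg : ∀ t ∈ Set.Icc (0:ℝ) ymax, 0 ≤ ∫ z in (0:ℝ)..t, f z := by
    intro t ht
    have h0 : (0:ℝ) ∈ Set.Icc 0 ymax := ⟨le_refl _, hymax0⟩
    have hsg := primitive_diff_ge hf_mono hf_cont h0 ht
    have hf0 : 0 ≤ f 0 := (hf_maps h0).1
    have ht0 : 0 ≤ t := ht.1
    simp only [intervalIntegral.integral_same, sub_zero] at hsg
    nlinarith
  -- continuity of the primitives
  have hG_cont : ContinuousOn (fun t => ∫ z in (0:ℝ)..t, g z) (Set.Icc 0 xmax) := by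
    have huicc : Set.uIcc (0:ℝ) xmax = Set.Icc 0 xmax := Set.uIcc_of_le hxmax0
    have hint : MeasureTheory.IntegrableOn g (Set.uIcc (0:ℝ) xmax) := by
      rw [huicc]; exact hg_cont.integrableOn_Icc
    have := intervalIntegral.continuousOn_primitive_interval hint
    rwa [huicc] at this
  have hF_cont : ContinuousOn (fun t => ∫ z in (0:ℝ)..t, f z) (Set.Icc 0 ymax) := by
    have huicc : Set.uIcc (0:ℝ) ymax = Set.Icc 0 ymax := Set.uIcc_of_le hymax0
    have hint : MeasureTheory.IntegrableOn f (Set.uIcc (0:ℝ) ymax) := by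
      rw [huicc]; exact hf_cont.integrableOn_Icc
    have := intervalIntegral.continuousOn_primitive_interval hint
    rwa [huicc] at this
  have hUs_cont : ContinuousOn Us (Set.Icc 0 xmax) := by
    have hUseq : Us = fun x => x * g x - (∫ z in (0:ℝ)..x, g z) - ∫ z in (0:ℝ)..(g x), f z :=
      funext hUs
    rw [hUseq]
    exact ((continuousOn_id.mul hg_cont).sub hG_cont).sub (hF_cont.comp hg_cont hg_maps)
  -- the energy gap δ
  obtain ⟨δ, hδpos, hδbd⟩ : ∃ δ : ℝ, 0 < δ ∧
      ∀ t ∈ Set.Icc (0:ℝ) xmax, t < xund - η → Us xund + δ ≤ Us t := by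
    by_cases hc : η < xund
    · have ha0 : (0:ℝ) ≤ xund - η := by linarith
      have haxm : xund - η ≤ xmax := by have := hxund_mem.2; linarith
      have hsub : Set.Icc (0:ℝ) (xund - η) ⊆ Set.Icc 0 xmax := Set.Icc_subset_Icc le_rfl haxm
      obtain ⟨z₀, hz₀mem, hz₀min⟩ :=
        (isCompact_Icc : IsCompact (Set.Icc (0:ℝ) (xund - η))).exists_isMinOn
          ⟨0, le_refl _, ha0⟩ (hUs_cont.mono hsub)
      refine ⟨Us z₀ - Us xund, ?_, ?_⟩
      · have hle : Us xund ≤ Us z₀ := hxund_min z₀ (hsub hz₀mem)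
        rcases lt_or_eq_of_le hle with h | h
        · linarith
        · exfalso
          have hmin : ∀ z ∈ Set.Icc (0:ℝ) xmax, Us z₀ ≤ Us z := fun z hz => h ▸ hxund_min z hz
          have hge := hxund_least z₀ (hsub hz₀mem) hmin
          have := hz₀mem.2; linarith
      · intro t ht htlt
        have htmem : t ∈ Set.Icc (0:ℝ) (xund - η) := ⟨ht.1, le_of_lt htlt⟩
        have := hz₀min htmem
        simp only [Set.mem_setOf_eq] at this
        linarith
    · refine ⟨1, one_pos, fun t ht htlt => absurd ?_ hc⟩
      exfalso
      push_neg at hc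
      have := ht.1
      linarith
  refine ⟨Nat.ceil ((w : ℝ) * (∫ z in (0:ℝ)..(g xund), f z) / δ), fun N hN xinf hlim => ?_⟩
  by_contra hcon
  push_neg at hcon
  have hN1 : 1 ≤ N := by omega
  -- matrix facts
  have hAnn : ∀ (j : Fin N) (k : Fin (N + w - 1)), 0 ≤ Amat w N j k := Amat_nonneg w N
  have hrow : ∀ j : Fin N, ∑ k, Amat w N j k = 1 := fun j => Amat_row_sum hw j
  have hcol : ∀ k : Fin (N + w - 1), ∑ j, Amat w N j k ≤ 1 := fun k => Amat_col_sum_le hw k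
  -- membership facts
  have hy_mem : ∀ x : Fin (N + w - 1) → ℝ, (∀ k, x k ∈ Set.Icc (0:ℝ) xmax) →
      ∀ j, yvec w N g x j ∈ Set.Icc (0:ℝ) ymax := by
    intro x hx j
    constructor
    · exact Finset.sum_nonneg fun k _ => mul_nonneg (hAnn j k) (hg_maps (hx k)).1
    · calc ∑ k, Amat w N j k * g (x k) ≤ ∑ k, Amat w N j k * ymax :=
            Finset.sum_le_sum fun k _ => mul_le_mul_of_nonneg_left (hg_maps (hx k)).2 (hAnn j k)
        _ = ymax := by rw [← Finset.sum_mul, hrow j, one_mul]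
  have hmap_eq : ∀ (x : Fin (N + w - 1) → ℝ) (i : Fin (N + w - 1)),
      coupledMap w N f g x i = ∑ j, Amat w N j i * f (yvec w N g x j) := fun x i => rfl
  have hmap_mem : ∀ x : Fin (N + w - 1) → ℝ, (∀ k, x k ∈ Set.Icc (0:ℝ) xmax) →
      ∀ i, coupledMap w N f g x i ∈ Set.Icc (0:ℝ) xmax := by
    intro x hx i
    rw [hmap_eq]
    constructor
    · exact Finset.sum_nonneg fun j _ => mul_nonneg (hAnn j i) (hf_maps (hy_mem x hx j)).1
    · calc ∑ j, Amat w N j i * f (yvec w N g x j) ≤ ∑ j, Amat w N j i * xmax :=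
            Finset.sum_le_sum fun j _ =>
              mul_le_mul_of_nonneg_left (hf_maps (hy_mem x hx j)).2 (hAnn j i)
        _ = (∑ j, Amat w N j i) * xmax := (Finset.sum_mul _ _ _).symm
        _ ≤ 1 * xmax := mul_le_mul_of_nonneg_right (hcol i) hxmax0
        _ = xmax := one_mul _
  have hseq_succ : ∀ ℓ, coupledSeq w N f g xmax (ℓ + 1)
      = coupledMap w N f g (coupledSeq w N f g xmax ℓ) := fun ℓ => rfl
  have hseq_mem : ∀ ℓ k, coupledSeq w N f g xmax ℓ k ∈ Set.Icc (0:ℝ) xmax := by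
    intro ℓ
    induction ℓ with
    | zero => intro k; exact ⟨hxmax0, le_refl _⟩
    | succ n ih => intro k; rw [hseq_succ]; exact hmap_mem _ ih k
  have hxinf_mem : ∀ k, xinf k ∈ Set.Icc (0:ℝ) xmax := fun k =>
    isClosed_Icc.mem_of_tendsto (hlim k) (Filter.Eventually.of_forall fun ℓ => hseq_mem ℓ k)
  have hMpos : 0 < N + w - 1 := by omega
  have hxinf_lt : ∀ k, xinf k < xund - η := fun k => by have := hcon k; linarith
  -- monotonicity of the coupled map
  have hmono_map : ∀ x x' : Fin (N + w - 1) → ℝ, (∀ k, x k ∈ Set.Icc (0:ℝ) xmax) →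
      (∀ k, x' k ∈ Set.Icc (0:ℝ) xmax) → (∀ k, x k ≤ x' k) →
      ∀ i, coupledMap w N f g x i ≤ coupledMap w N f g x' i := by
    intro x x' hx hx' hle i
    rw [hmap_eq, hmap_eq]
    refine Finset.sum_le_sum fun j _ => mul_le_mul_of_nonneg_left ?_ (hAnn j i)
    refine hf_mono (hy_mem x hx j) (hy_mem x' hx' j) ?_
    exact Finset.sum_le_sum fun k _ =>
      mul_le_mul_of_nonneg_left (hg_mono (hx k) (hx' k) (hle k)) (hAnn j k)
  -- convergence transport through g, yvec, f
  have hwithin : ∀ (u : ℕ → ℝ) (c : ℝ) (s : Set ℝ), Tendsto u atTop (nhds c) →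
      (∀ ℓ, u ℓ ∈ s) → Tendsto u atTop (nhdsWithin c s) := fun u c s h hm =>
    tendsto_nhdsWithin_of_tendsto_nhds_of_eventually_within u h (Filter.Eventually.of_forall hm)
  have htend_y : ∀ (u : ℕ → Fin (N + w - 1) → ℝ) (v : Fin (N + w - 1) → ℝ),
      (∀ ℓ k, u ℓ k ∈ Set.Icc (0:ℝ) xmax) → (∀ k, v k ∈ Set.Icc (0:ℝ) xmax) →
      (∀ k, Tendsto (fun ℓ => u ℓ k) atTop (nhds (v k))) →
      ∀ j, Tendsto (fun ℓ => yvec w N g (u ℓ) j) atTop (nhds (yvec w N g v j)) := by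
    intro u v hu hv ht j
    have : ∀ k, Tendsto (fun ℓ => g (u ℓ k)) atTop (nhds (g (v k))) := fun k =>
      (hg_cont (v k) (hv k)).tendsto.comp
        (hwithin _ _ _ (ht k) (fun ℓ => hu ℓ k))
    exact tendsto_finset_sum _ fun k _ => (this k).const_mul _
  have htend_map : ∀ (u : ℕ → Fin (N + w - 1) → ℝ) (v : Fin (N + w - 1) → ℝ),
      (∀ ℓ k, u ℓ k ∈ Set.Icc (0:ℝ) xmax) → (∀ k, v k ∈ Set.Icc (0:ℝ) xmax) →
      (∀ k, Tendsto (fun ℓ => u ℓ k) atTop (nhds (v k))) →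
      ∀ i, Tendsto (fun ℓ => coupledMap w N f g (u ℓ) i) atTop
        (nhds (coupledMap w N f g v i)) := by
    intro u v hu hv ht i
    have hfy : ∀ j, Tendsto (fun ℓ => f (yvec w N g (u ℓ) j)) atTop
        (nhds (f (yvec w N g v j))) := fun j =>
      (hf_cont _ (hy_mem v hv j)).tendsto.comp
        (hwithin _ _ _ (htend_y u v hu hv ht j) (fun ℓ => hy_mem (u ℓ) (hu ℓ) j))
    simp only [hmap_eq]
    exact tendsto_finset_sum _ fun j _ => (hfy j).const_mul _
  -- xinf is a fixed point
  have hfix : ∀ i, coupledMap w N f g xinf i = xinf i := by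
    intro i
    have h1 : Tendsto (fun ℓ => coupledSeq w N f g xmax (ℓ + 1) i) atTop (nhds (xinf i)) :=
      (hlim i).comp (Filter.tendsto_add_atTop_nat 1)
    have h2 : Tendsto (fun ℓ => coupledMap w N f g (coupledSeq w N f g xmax ℓ) i) atTop
        (nhds (coupledMap w N f g xinf i)) :=
      htend_map _ _ (fun ℓ k => hseq_mem ℓ k) hxinf_mem (fun k => hlim k) i
    exact tendsto_nhds_unique h2 h1
  -- the constant profile z and its iterates
  set z : Fin (N + w - 1) → ℝ := fun _ => xund with hzdef
  have hz_mem : ∀ k, z k ∈ Set.Icc (0:ℝ) xmax := fun _ => hxund_mem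
  set sz : ℕ → Fin (N + w - 1) → ℝ := fun ℓ => (coupledMap w N f g)^[ℓ] z with hszdef
  have hsz_succ : ∀ ℓ, sz (ℓ + 1) = coupledMap w N f g (sz ℓ) := fun ℓ =>
    Function.iterate_succ_apply' _ _ _
  have hsz_mem : ∀ ℓ k, sz ℓ k ∈ Set.Icc (0:ℝ) xmax := by
    intro ℓ
    induction ℓ with
    | zero => exact hz_mem
    | succ n ih => rw [hsz_succ]; exact hmap_mem _ ih
  have hsz_lower : ∀ ℓ k, xinf k ≤ sz ℓ k := by
    intro ℓ
    induction ℓ with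
    | zero => intro k; have h := hxinf_lt k; have hz0 : sz 0 k = xund := rfl; rw [hz0]; linarith
    | succ n ih =>
        intro k
        rw [hsz_succ]
        calc xinf k = coupledMap w N f g xinf k := (hfix k).symm
          _ ≤ coupledMap w N f g (sz n) k := hmono_map _ _ hxinf_mem (hsz_mem n) ih k
  have hsz_upper : ∀ ℓ k, sz ℓ k ≤ coupledSeq w N f g xmax ℓ k := by
    intro ℓ
    induction ℓ with
    | zero => intro k; exact hxund_mem.2
    | succ n ih =>
        intro k
        rw [hsz_succ, hseq_succ]
        exact hmono_map _ _ (hsz_mem n) (fun k' => hseq_mem n k') ih k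
  have hsz_tend : ∀ k, Tendsto (fun ℓ => sz ℓ k) atTop (nhds (xinf k)) := fun k =>
    tendsto_of_tendsto_of_tendsto_of_le_of_le tendsto_const_nhds (hlim k)
      (fun ℓ => hsz_lower ℓ k) (fun ℓ => hsz_upper ℓ k)
  -- Lyapunov property of the potential
  have hLya : ∀ x : Fin (N + w - 1) → ℝ, (∀ k, x k ∈ Set.Icc (0:ℝ) xmax) →
      Upot w N f g (coupledMap w N f g x) ≤ Upot w N f g x := by
    intro x hx
    set x' := coupledMap w N f g x with hx'def
    have hx' : ∀ k, x' k ∈ Set.Icc (0:ℝ) xmax := hmap_mem x hx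
    have hy : ∀ j, yvec w N g x j ∈ Set.Icc (0:ℝ) ymax := hy_mem x hx
    have hy' : ∀ j, yvec w N g x' j ∈ Set.Icc (0:ℝ) ymax := hy_mem x' hx'
    have step1 : ∀ j, f (yvec w N g x j) * (yvec w N g x' j - yvec w N g x j)
        ≤ (∫ zz in (0:ℝ)..(yvec w N g x' j), f zz) - ∫ zz in (0:ℝ)..(yvec w N g x j), f zz :=
      fun j => primitive_diff_ge hf_mono hf_cont (hy j) (hy' j)
    have step2 : ∑ j, f (yvec w N g x j) * (yvec w N g x' j - yvec w N g x j)
        = ∑ k, x' k * (g (x' k) - g (x k)) := by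
      have e1 : ∀ j, f (yvec w N g x j) * (yvec w N g x' j - yvec w N g x j)
          = ∑ k, Amat w N j k * f (yvec w N g x j) * (g (x' k) - g (x k)) := by
        intro j
        have hdiff : yvec w N g x' j - yvec w N g x j
            = ∑ k, Amat w N j k * (g (x' k) - g (x k)) := by
          unfold yvec
          rw [← Finset.sum_sub_distrib]
          exact Finset.sum_congr rfl fun k _ => by ring
        rw [hdiff, Finset.mul_sum]
        exact Finset.sum_congr rfl fun k _ => by ring
      rw [Finset.sum_congr rfl (fun j _ => e1 j), Finset.sum_comm]
      refine Finset.sum_congr rfl fun k _ => ?_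
      have hx'k : x' k = ∑ j, Amat w N j k * f (yvec w N g x j) := rfl
      rw [hx'k, Finset.sum_mul]
    have step3 : ∀ k, (x' k * g (x' k) - ∫ zz in (0:ℝ)..(x' k), g zz)
        - (x k * g (x k) - ∫ zz in (0:ℝ)..(x k), g zz)
        - x' k * (g (x' k) - g (x k)) ≤ 0 := by
      intro k
      have h := primitive_diff_ge hg_mono hg_cont (hx k) (hx' k)
      nlinarith [h]
    have sumstep3 : ∑ k, ((x' k * g (x' k) - ∫ zz in (0:ℝ)..(x' k), g zz)
        - (x k * g (x k) - ∫ zz in (0:ℝ)..(x k), g zz)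
        - x' k * (g (x' k) - g (x k))) ≤ 0 :=
      Finset.sum_nonpos fun k _ => step3 k
    have sumstep1 : ∑ j, f (yvec w N g x j) * (yvec w N g x' j - yvec w N g x j)
        ≤ (∑ j, ∫ zz in (0:ℝ)..(yvec w N g x' j), f zz)
          - ∑ j, ∫ zz in (0:ℝ)..(yvec w N g x j), f zz := by
      rw [← Finset.sum_sub_distrib]
      exact Finset.sum_le_sum fun j _ => by have := step1 j; linarith
    have hexpand : ∑ k, ((x' k * g (x' k) - ∫ zz in (0:ℝ)..(x' k), g zz)
        - (x k * g (x k) - ∫ zz in (0:ℝ)..(x k), g zz)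
        - x' k * (g (x' k) - g (x k)))
        = (∑ k, (x' k * g (x' k) - ∫ zz in (0:ℝ)..(x' k), g zz))
          - (∑ k, (x k * g (x k) - ∫ zz in (0:ℝ)..(x k), g zz))
          - ∑ k, x' k * (g (x' k) - g (x k)) := by
      rw [← Finset.sum_sub_distrib, ← Finset.sum_sub_distrib]
    unfold Upot
    rw [hexpand] at sumstep3
    rw [step2] at sumstep1
    linarith
  have hUz_iter : ∀ ℓ, Upot w N f g (sz ℓ) ≤ Upot w N f g z := by
    intro ℓ
    induction ℓ with
    | zero => exact le_refl _
    | succ n ih =>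
        rw [hsz_succ]
        exact le_trans (hLya _ (hsz_mem n)) ih
  -- potential converges along sz
  have hU_tend : Tendsto (fun ℓ => Upot w N f g (sz ℓ)) atTop (nhds (Upot w N f g xinf)) := by
    have hW : ∀ i, Tendsto (fun ℓ => sz ℓ i * g (sz ℓ i) - ∫ zz in (0:ℝ)..(sz ℓ i), g zz)
        atTop (nhds (xinf i * g (xinf i) - ∫ zz in (0:ℝ)..(xinf i), g zz)) := by
      intro i
      have h1 : Tendsto (fun ℓ => sz ℓ i) atTop (nhds (xinf i)) := hsz_tend i
      have h2 : Tendsto (fun ℓ => g (sz ℓ i)) atTop (nhds (g (xinf i))) :=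
        (hg_cont _ (hxinf_mem i)).tendsto.comp
          (hwithin _ _ _ h1 (fun ℓ => hsz_mem ℓ i))
      have h3 : Tendsto (fun ℓ => ∫ zz in (0:ℝ)..(sz ℓ i), g zz) atTop
          (nhds (∫ zz in (0:ℝ)..(xinf i), g zz)) :=
        (hG_cont _ (hxinf_mem i)).tendsto.comp
          (hwithin _ _ _ h1 (fun ℓ => hsz_mem ℓ i))
      exact (h1.mul h2).sub h3
    have hFy : ∀ j, Tendsto (fun ℓ => ∫ zz in (0:ℝ)..(yvec w N g (sz ℓ) j), f zz) atTop
        (nhds (∫ zz in (0:ℝ)..(yvec w N g xinf j), f zz)) := by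
      intro j
      have hyt := htend_y sz xinf (fun ℓ k => hsz_mem ℓ k) hxinf_mem hsz_tend j
      exact (hF_cont _ (hy_mem xinf hxinf_mem j)).tendsto.comp
        (hwithin _ _ _ hyt (fun ℓ => hy_mem (sz ℓ) (hsz_mem ℓ) j))
    unfold Upot
    exact (tendsto_finset_sum _ fun i _ => hW i).sub (tendsto_finset_sum _ fun j _ => hFy j)
  have hUlim : Upot w N f g xinf ≤ Upot w N f g z :=
    le_of_tendsto hU_tend (Filter.Eventually.of_forall hUz_iter)
  -- Jensen lower bound
  have hJen : ∑ i, Us (xinf i) ≤ Upot w N f g xinf := by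
    have key : ∀ j, (∫ zz in (0:ℝ)..(yvec w N g xinf j), f zz)
        ≤ ∑ k, Amat w N j k * ∫ zz in (0:ℝ)..(g (xinf k)), f zz := by
      intro j
      have hyb : yvec w N g xinf j ∈ Set.Icc (0:ℝ) ymax := hy_mem xinf hxinf_mem j
      have hsubg : ∀ k, Amat w N j k * ((∫ zz in (0:ℝ)..(yvec w N g xinf j), f zz)
          + f (yvec w N g xinf j) * (g (xinf k) - yvec w N g xinf j))
          ≤ Amat w N j k * ∫ zz in (0:ℝ)..(g (xinf k)), f zz := by
        intro k
        refine mul_le_mul_of_nonneg_left ?_ (hAnn j k)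
        have := primitive_diff_ge hf_mono hf_cont hyb (hg_maps (hxinf_mem k))
        linarith
      have hexp : ∑ k, Amat w N j k * ((∫ zz in (0:ℝ)..(yvec w N g xinf j), f zz)
          + f (yvec w N g xinf j) * (g (xinf k) - yvec w N g xinf j))
          = ∫ zz in (0:ℝ)..(yvec w N g xinf j), f zz := by
        have e : ∀ k : Fin (N + w - 1), Amat w N j k * ((∫ zz in (0:ℝ)..(yvec w N g xinf j), f zz)
            + f (yvec w N g xinf j) * (g (xinf k) - yvec w N g xinf j))
            = ((∫ zz in (0:ℝ)..(yvec w N g xinf j), f zz)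
                - f (yvec w N g xinf j) * yvec w N g xinf j) * Amat w N j k
              + f (yvec w N g xinf j) * (Amat w N j k * g (xinf k)) := fun k => by ring
        rw [Finset.sum_congr rfl (fun k _ => e k), Finset.sum_add_distrib,
          ← Finset.mul_sum, ← Finset.mul_sum, hrow j]
        have hysum : ∑ k, Amat w N j k * g (xinf k) = yvec w N g xinf j := rfl
        rw [hysum]
        ring
      rw [← hexp]
      exact Finset.sum_le_sum fun k _ => hsubg k
    have key2 : ∑ j, (∫ zz in (0:ℝ)..(yvec w N g xinf j), f zz)
        ≤ ∑ k, ∫ zz in (0:ℝ)..(g (xinf k)), f zz := by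
      calc ∑ j, (∫ zz in (0:ℝ)..(yvec w N g xinf j), f zz)
          ≤ ∑ j, ∑ k, Amat w N j k * ∫ zz in (0:ℝ)..(g (xinf k)), f zz :=
            Finset.sum_le_sum fun j _ => key j
        _ = ∑ k, (∑ j, Amat w N j k) * ∫ zz in (0:ℝ)..(g (xinf k)), f zz := by
            rw [Finset.sum_comm]
            exact Finset.sum_congr rfl fun k _ => (Finset.sum_mul _ _ _).symm
        _ ≤ ∑ k, 1 * ∫ zz in (0:ℝ)..(g (xinf k)), f zz :=
            Finset.sum_le_sum fun k _ => mul_le_mul_of_nonneg_right (hcol k)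
              (hF_nonneg _ (hg_maps (hxinf_mem k)))
        _ = ∑ k, ∫ zz in (0:ℝ)..(g (xinf k)), f zz := by
            exact Finset.sum_congr rfl fun k _ => one_mul _
    calc ∑ i, Us (xinf i)
        = ∑ i, ((xinf i * g (xinf i) - ∫ zz in (0:ℝ)..(xinf i), g zz)
            - ∫ zz in (0:ℝ)..(g (xinf i)), f zz) :=
          Finset.sum_congr rfl fun i _ => hUs (xinf i)
      _ = (∑ i, (xinf i * g (xinf i) - ∫ zz in (0:ℝ)..(xinf i), g zz))
            - ∑ i, ∫ zz in (0:ℝ)..(g (xinf i)), f zz := Finset.sum_sub_distrib _ _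
      _ ≤ (∑ i, (xinf i * g (xinf i) - ∫ zz in (0:ℝ)..(xinf i), g zz))
            - ∑ j, ∫ zz in (0:ℝ)..(yvec w N g xinf j), f zz := by linarith
      _ = Upot w N f g xinf := rfl
  -- value of the potential at the constant profile
  have hUz : Upot w N f g z = ((N + w - 1 : ℕ) : ℝ)
      * (xund * g xund - ∫ zz in (0:ℝ)..xund, g zz)
      - (N : ℝ) * ∫ zz in (0:ℝ)..(g xund), f zz := by
    have hyz : ∀ j : Fin N, yvec w N g z j = g xund := by
      intro j
      unfold yvec
      simp only [hzdef]
      rw [← Finset.sum_mul, hrow j, one_mul]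
    unfold Upot
    rw [Finset.sum_congr rfl (fun (j : Fin N) _ => by rw [hyz j])]
    simp only [hzdef, Finset.sum_const, Finset.card_univ, Fintype.card_fin, nsmul_eq_mul]
  -- final contradiction
  have hlow : ∀ i, Us xund + δ ≤ Us (xinf i) := fun i =>
    hδbd (xinf i) (hxinf_mem i) (hxinf_lt i)
  have hsum : ((N + w - 1 : ℕ) : ℝ) * (Us xund + δ) ≤ ∑ i, Us (xinf i) := by
    calc ((N + w - 1 : ℕ) : ℝ) * (Us xund + δ)
        = ∑ _i : Fin (N + w - 1), (Us xund + δ) := by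
          rw [Finset.sum_const, Finset.card_univ, Fintype.card_fin, nsmul_eq_mul]
      _ ≤ ∑ i, Us (xinf i) := Finset.sum_le_sum fun i _ => hlow i
  have hUsxund : Us xund = (xund * g xund - ∫ zz in (0:ℝ)..xund, g zz)
      - ∫ zz in (0:ℝ)..(g xund), f zz := hUs xund
  set Fg : ℝ := ∫ zz in (0:ℝ)..(g xund), f zz with hFgdef
  have hFg0 : 0 ≤ Fg := hF_nonneg (g xund) (hg_maps hxund_mem)
  have hMcast : ((N + w - 1 : ℕ) : ℝ) = (N : ℝ) + (w : ℝ) - 1 := by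
    have h : (N + w - 1 : ℕ) + 1 = N + w := by omega
    have := congrArg (fun n : ℕ => (n : ℝ)) h
    push_cast at this
    linarith
  have hceil : (w : ℝ) * Fg ≤ (Nat.ceil ((w : ℝ) * Fg / δ) : ℝ) * δ := by
    have h1 : (w : ℝ) * Fg / δ ≤ (Nat.ceil ((w : ℝ) * Fg / δ) : ℝ) := Nat.le_ceil _
    calc (w : ℝ) * Fg = ((w : ℝ) * Fg / δ) * δ := by field_simp
      _ ≤ (Nat.ceil ((w : ℝ) * Fg / δ) : ℝ) * δ := mul_le_mul_of_nonneg_right h1 hδpos.le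
  have hNlt : ((Nat.ceil ((w : ℝ) * Fg / δ) : ℕ) : ℝ) < (N : ℝ) := by exact_mod_cast hN
  have hw1 : (1 : ℝ) ≤ (w : ℝ) := by exact_mod_cast hw
  -- assemble: M (Us xund + δ) ≤ ∑ Us (xinf i) ≤ Upot xinf ≤ Upot z = M W - N Fg
  have hchain : ((N + w - 1 : ℕ) : ℝ) * (Us xund + δ)
      ≤ ((N + w - 1 : ℕ) : ℝ) * (xund * g xund - ∫ zz in (0:ℝ)..xund, g zz) - (N : ℝ) * Fg := by
    calc ((N + w - 1 : ℕ) : ℝ) * (Us xund + δ) ≤ ∑ i, Us (xinf i) := hsum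
      _ ≤ Upot w N f g xinf := hJen
      _ ≤ Upot w N f g z := hUlim
      _ = _ := hUz
  rw [hMcast] at hchain
  rw [hUsxund] at hchain
  -- hchain : (N + w - 1) * (W - Fg + δ) ≤ (N + w - 1) * W - N * Fg
  -- so (N + w - 1) δ ≤ (w - 1) Fg ≤ w Fg ≤ ceil * δ < N δ ≤ (N + w - 1) δ
  nlinarith [hchain, hceil, hNlt, hδpos, hFg0, hw1]
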